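/- Conversely, let ḡ be a continuous R-algebra automorphism of W = R((z^{1/e})) in the connected component of the identity (i.e., ḡ(z^{1/e}) = Σ_i a_i z^{i/e}·z^{1/e} with a_i nilpotent for i<0 and a_0 invertible). If tr∘ḡ = ḡ∘tr on W (where tr: W → R((z)) is the trace), then ḡ preserves V = R((z)), i.e., ḡ(V) = V. -/

import Mathlib

open HahnSeries

/-- The embedding `R((z)) → R((z^{1/e}))`, modelled as the ring homomorphism
`R((z)) → R((t))` sending `z ↦ t^e` (where `t` plays the role of `z^{1/e}`),
i.e. rescaling exponents by `e`.  Here the ring of formal Laurent series `R((z))`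
is `HahnSeries ℤ R` (Mathlib's `LaurentSeries R`). -/
noncomputable def rootEmb (R : Type*) [CommRing R] (e : ℕ) (he : 0 < e) :
    HahnSeries ℤ R →+* HahnSeries ℤ R :=
  HahnSeries.embDomainRingHom (AddMonoidHom.mulLeft (e : ℤ))
    (fun a b hab => by
      have h : (e : ℤ) * a = (e : ℤ) * b := hab
      exact mul_left_cancel₀ (by exact_mod_cast he.ne') h)
    (fun a b => by
      show (e : ℤ) * a ≤ (e : ℤ) * b ↔ a ≤ b
      exact mul_le_mul_iff_of_pos_left (by exact_mod_cast he))

/-- The image `V = R((z)) ⊆ W = R((z^{1/e}))` of the above embedding, as a subring: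
the series supported on exponents divisible by `e`. -/
noncomputable def rootSub (R : Type*) [CommRing R] (e : ℕ) (he : 0 < e) :
    Subring (HahnSeries ℤ R) :=
  (rootEmb R e he).range

section Aux

variable {R : Type*} [CommRing R] {e : ℕ} (he : 0 < e)

/-- Support of a Hahn series over `ℤ` is bounded below. -/
lemma hahn_bddBelow (f : HahnSeries ℤ R) : BddBelow f.support := by
  rcases Set.eq_empty_or_nonempty f.support with h | h
  · rw [h]; exact bddBelow_empty
  · exact ⟨f.isPWO_support.isWF.min h, fun a ha => Set.IsWF.min_le _ _ ha⟩

lemma rootEmb_coeff_mul (g : HahnSeries ℤ R) (a : ℤ) :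
    (rootEmb R e he g).coeff ((e : ℤ) * a) = g.coeff a :=
  embDomain_coeff

lemma rootEmb_coeff_not (g : HahnSeries ℤ R) {n : ℤ} (hn : ¬ (e : ℤ) ∣ n) :
    (rootEmb R e he g).coeff n = 0 := by
  apply embDomain_notin_range
  rintro ⟨a, ha⟩
  exact hn ⟨a, ha.symm⟩

lemma mem_rootSub_iff {f : HahnSeries ℤ R} :
    f ∈ rootSub R e he ↔ ∀ n : ℤ, ¬ (e : ℤ) ∣ n → f.coeff n = 0 := by
  constructor
  · rintro ⟨g, rfl⟩ n hn
    exact rootEmb_coeff_not he g hn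
  · intro h
    have hb : BddBelow (Function.support fun m => f.coeff ((e : ℤ) * m)) := by
      obtain ⟨b, hbb⟩ := hahn_bddBelow f
      refine ⟨b / (e : ℤ), fun m hm => ?_⟩
      have hble : b ≤ (e : ℤ) * m := hbb hm
      calc b / (e : ℤ) ≤ ((e : ℤ) * m) / (e : ℤ) :=
            Int.ediv_le_ediv (by exact_mod_cast he) hble
        _ = m := Int.mul_ediv_cancel_left m (by exact_mod_cast he.ne')
    refine ⟨ofSuppBddBelow _ hb, coeff_injective ?_⟩
    funext n
    by_cases hd : (e : ℤ) ∣ n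
    · obtain ⟨a, rfl⟩ := hd
      rw [rootEmb_coeff_mul he]
      rfl
    · rw [rootEmb_coeff_not he _ hd, h n hd]

lemma smul_mem_rootSub (r : R) {f : HahnSeries ℤ R} (hf : f ∈ rootSub R e he) :
    r • f ∈ rootSub R e he := by
  rw [mem_rootSub_iff he] at hf ⊢
  intro n hn
  rw [HahnSeries.coeff_smul, hf n hn, smul_zero]

lemma single_one_mul_coeff {j : ℤ} {c : HahnSeries ℤ R} {n : ℤ} :
    (c * single j (1 : R)).coeff n = c.coeff (n - j) := by
  have h := coeff_mul_single_add (r := (1 : R)) (x := c) (a := n - j) (b := j)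
  rw [sub_add_cancel] at h
  rw [h, mul_one]

lemma fin_eq_of_dvd_sub {j j' : Fin e} (h : (e : ℤ) ∣ (((j : ℕ) : ℤ) - ((j' : ℕ) : ℤ))) :
    j = j' := by
  have hj : (j : ℕ) < e := j.2
  have hj' : (j' : ℕ) < e := j'.2
  have h0 : (((j : ℕ) : ℤ) - ((j' : ℕ) : ℤ)) = 0 :=
    Int.eq_zero_of_abs_lt_dvd h (by rw [abs_lt]; omega)
  exact Fin.ext (by omega)

lemma rootSub_coe_smul (v : rootSub R e he) (w : HahnSeries ℤ R) :
    v • w = (v : HahnSeries ℤ R) * w := rfl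

/-- linear independence of `1, t, …, t^{e-1}` over `V`. -/
lemma rootBasis_indep :
    LinearIndependent (rootSub R e he)
      (fun j : Fin e => single (((j : ℕ) : ℤ)) (1 : R)) := by
  rw [Fintype.linearIndependent_iff]
  intro g hg j
  have hcoeff : ∀ m : ℤ, ((g j : HahnSeries ℤ R)).coeff ((e : ℤ) * m) = 0 := by
    intro m
    have h1 := congrArg (coeff.addMonoidHom ((e : ℤ) * m + ((j : ℕ) : ℤ))) hg
    rw [map_sum, map_zero] at h1
    rw [Finset.sum_eq_single j] at h1
    · rw [rootSub_coe_smul, show coeff.addMonoidHom ((e:ℤ)*m + ((j:ℕ):ℤ))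
          ((g j : HahnSeries ℤ R) * single (((j:ℕ):ℤ)) (1:R)) =
          ((g j : HahnSeries ℤ R) * single (((j:ℕ):ℤ)) (1:R)).coeff
            ((e:ℤ)*m + ((j:ℕ):ℤ)) from rfl,
        single_one_mul_coeff, add_sub_cancel_right] at h1
      exact h1
    · intro j' _ hj'
      rw [rootSub_coe_smul]
      show ((g j' : HahnSeries ℤ R) * single (((j' : ℕ) : ℤ)) (1 : R)).coeff
        ((e : ℤ) * m + ((j : ℕ) : ℤ)) = 0
      rw [single_one_mul_coeff]
      have hmem := (mem_rootSub_iff he).mp (g j').2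
      apply hmem
      intro hdvd
      have hd2 : (e : ℤ) ∣ (((j : ℕ) : ℤ) - ((j' : ℕ) : ℤ)) := by
        have h3 : ((e : ℤ) * m + ((j : ℕ) : ℤ) - ((j' : ℕ) : ℤ))
            - (e : ℤ) * m = ((j : ℕ) : ℤ) - ((j' : ℕ) : ℤ) := by ring
        rw [← h3]
        exact dvd_sub hdvd ⟨m, rfl⟩
      exact hj' (fin_eq_of_dvd_sub hd2).symm
    · intro hj; exact absurd (Finset.mem_univ j) hj
  have hz : (g j : HahnSeries ℤ R) = 0 := by
    apply coeff_injective
    funext n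
    by_cases hd : (e : ℤ) ∣ n
    · obtain ⟨m, rfl⟩ := hd
      exact hcoeff m
    · exact (mem_rootSub_iff he).mp (g j).2 n hd
  exact Subtype.ext hz

/-- The component of `f` supported on exponents `≡ j mod e`, shifted down by `j`. -/
noncomputable def rootComp (f : HahnSeries ℤ R) (j : Fin e) : HahnSeries ℤ R :=
  ofSuppBddBelow (fun m => if (e : ℤ) ∣ m then f.coeff (m + ((j : ℕ) : ℤ)) else 0)
    (by
      obtain ⟨b, hbb⟩ := hahn_bddBelow f
      refine ⟨b - ((j : ℕ) : ℤ), fun m hm => ?_⟩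
      have hm' : f.coeff (m + ((j : ℕ) : ℤ)) ≠ 0 := by
        intro h0
        apply hm
        simp only [h0, ite_self]
      have := hbb hm'
      omega)

lemma rootComp_mem (f : HahnSeries ℤ R) (j : Fin e) :
    rootComp f j ∈ rootSub R e he := by
  rw [mem_rootSub_iff he]
  intro n hn
  show (if (e : ℤ) ∣ n then f.coeff (n + ((j : ℕ) : ℤ)) else 0) = 0
  rw [if_neg hn]

lemma rootBasis_span (f : HahnSeries ℤ R) :
    f = ∑ j : Fin e, (⟨rootComp f j, rootComp_mem he f j⟩ : rootSub R e he) •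
      single (((j : ℕ) : ℤ)) (1 : R) := by
  apply coeff_injective
  funext n
  rw [show (∑ j : Fin e, (⟨rootComp f j, rootComp_mem he f j⟩ : rootSub R e he) •
      single (((j : ℕ) : ℤ)) (1 : R)).coeff n
      = coeff.addMonoidHom n (∑ j : Fin e,
        (⟨rootComp f j, rootComp_mem he f j⟩ : rootSub R e he) •
        single (((j : ℕ) : ℤ)) (1 : R)) from rfl, map_sum]
  have hnn : 0 ≤ n % (e : ℤ) := Int.emod_nonneg n (by exact_mod_cast he.ne')
  have hlt : n % (e : ℤ) < (e : ℤ) := Int.emod_lt_of_pos n (by exact_mod_cast he)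
  set j0 : Fin e := ⟨(n % (e : ℤ)).toNat, by omega⟩ with hj0
  have hj0v : ((j0 : ℕ) : ℤ) = n % (e : ℤ) := by
    rw [hj0]; exact Int.toNat_of_nonneg hnn
  have hdvd0 : (e : ℤ) ∣ (n - ((j0 : ℕ) : ℤ)) := by
    rw [hj0v]
    refine ⟨n / (e : ℤ), ?_⟩
    have := Int.mul_ediv_add_emod n (e : ℤ)
    linarith
  rw [Finset.sum_eq_single j0]
  · rw [rootSub_coe_smul]
    show f.coeff n = ((rootComp f j0) * single (((j0 : ℕ) : ℤ)) (1 : R)).coeff n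
    rw [single_one_mul_coeff]
    show f.coeff n = (if (e : ℤ) ∣ (n - ((j0 : ℕ) : ℤ)) then
      f.coeff ((n - ((j0 : ℕ) : ℤ)) + ((j0 : ℕ) : ℤ)) else 0)
    rw [if_pos hdvd0, sub_add_cancel]
  · intro j _ hj
    rw [rootSub_coe_smul]
    show ((rootComp f j) * single (((j : ℕ) : ℤ)) (1 : R)).coeff n = 0
    rw [single_one_mul_coeff]
    show (if (e : ℤ) ∣ (n - ((j : ℕ) : ℤ)) then
      f.coeff ((n - ((j : ℕ) : ℤ)) + ((j : ℕ) : ℤ)) else 0) = 0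
    rw [if_neg]
    intro hdvd
    apply hj
    apply fin_eq_of_dvd_sub
    have : (((j : ℕ) : ℤ) - ((j0 : ℕ) : ℤ)) =
        (n - ((j0 : ℕ) : ℤ)) - (n - ((j : ℕ) : ℤ)) := by ring
    rw [this]
    exact dvd_sub hdvd0 hdvd
  · intro hj; exact absurd (Finset.mem_univ j0) hj

/-- `1, t, …, t^{e-1}` is a basis of `W` over `V`. -/
noncomputable def rootBasis :
    Module.Basis (Fin e) (rootSub R e he) (HahnSeries ℤ R) :=
  Module.Basis.mk (rootBasis_indep he)
    (by
      intro f _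
      rw [rootBasis_span he f]
      exact Submodule.sum_mem _ fun j _ =>
        Submodule.smul_mem _ _ (Submodule.subset_span ⟨j, rfl⟩))

/-- On `V`, the trace from `W` to `V` is multiplication by `e`. -/
lemma trace_eq_nsmul {f : HahnSeries ℤ R} (hf : f ∈ rootSub R e he) :
    ((Algebra.trace (rootSub R e he) (HahnSeries ℤ R) f : rootSub R e he) :
      HahnSeries ℤ R) = e • f := by
  have h := Algebra.trace_algebraMap_of_basis (rootBasis he)
    (⟨f, hf⟩ : rootSub R e he)
  have h3 : Algebra.trace (rootSub R e he) (HahnSeries ℤ R) f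
      = Fintype.card (Fin e) • (⟨f, hf⟩ : rootSub R e he) := h
  rw [h3, Fintype.card_fin]
  rfl

end Aux

/-- Conversely, let `ḡ` be an `R`-algebra automorphism of
`W = R((z^{1/e}))` in the identity component (`ḡ(z^{1/e}) = z^{1/e}·u` with the
negative coefficients of `u` nilpotent and its `0`-th coefficient invertible).
If `tr ∘ ḡ = ḡ ∘ tr` on `W`, then `ḡ` preserves `V = R((z))`, i.e. `ḡ(V) = V`. -/
theorem preserves_base_of_trace_comm
    (R : Type*) [CommRing R] [Algebra ℂ R] (e : ℕ) (he : 0 < e)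
    (gbar : HahnSeries ℤ R ≃ₐ[R] HahnSeries ℤ R)
    (u : HahnSeries ℤ R)
    (hform : gbar (HahnSeries.single 1 1) = HahnSeries.single 1 1 * u)
    (hneg : ∀ i : ℤ, i < 0 → IsNilpotent (u.coeff i))
    (h0 : IsUnit (u.coeff 0))
    (hcomm : ∀ w : HahnSeries ℤ R,
      ((Algebra.trace (rootSub R e he) (HahnSeries ℤ R) (gbar w) :
          rootSub R e he) : HahnSeries ℤ R)
        = gbar ((Algebra.trace (rootSub R e he) (HahnSeries ℤ R) w :
            rootSub R e he) : HahnSeries ℤ R)) :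
    ⇑gbar '' (rootSub R e he : Set (HahnSeries ℤ R)) = rootSub R e he := by
  have hce : (algebraMap ℂ R ((e : ℂ)⁻¹)) * ((e : ℕ) : R) = 1 := by
    rw [show ((e : ℕ) : R) = algebraMap ℂ R ((e : ℕ) : ℂ) from (map_natCast _ e).symm,
      ← map_mul, inv_mul_cancel₀ (by exact_mod_cast he.ne' : ((e : ℕ) : ℂ) ≠ 0), map_one]
  have cancel : ∀ y : HahnSeries ℤ R, (algebraMap ℂ R ((e : ℂ)⁻¹)) • ((e : ℕ) • y) = y := by
    intro y
    rw [← Nat.cast_smul_eq_nsmul R, smul_smul, hce, one_smul]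
  have unscale : ∀ y : HahnSeries ℤ R, (e : ℕ) • y ∈ rootSub R e he → y ∈ rootSub R e he := by
    intro y hy
    have := smul_mem_rootSub he (algebraMap ℂ R ((e : ℂ)⁻¹)) hy
    rwa [cancel] at this
  have fwd : ∀ x ∈ rootSub R e he, gbar x ∈ rootSub R e he := by
    intro x hx
    have h1 : ((Algebra.trace (rootSub R e he) (HahnSeries ℤ R) (gbar x) :
        rootSub R e he) : HahnSeries ℤ R) = (e : ℕ) • gbar x := by
      rw [hcomm x, trace_eq_nsmul he hx, map_nsmul]
    exact unscale _ (h1 ▸ SetLike.coe_mem _)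
  have bwd : ∀ x ∈ rootSub R e he, gbar.symm x ∈ rootSub R e he := by
    intro x hx
    have h0' := hcomm (gbar.symm x)
    rw [AlgEquiv.apply_symm_apply] at h0'
    have h1 : ((Algebra.trace (rootSub R e he) (HahnSeries ℤ R) (gbar.symm x) :
        rootSub R e he) : HahnSeries ℤ R) = (e : ℕ) • gbar.symm x := by
      have h2 := congrArg gbar.symm h0'
      rw [AlgEquiv.symm_apply_apply] at h2
      rw [← h2, trace_eq_nsmul he hx, map_nsmul]
    exact unscale _ (h1 ▸ SetLike.coe_mem _)
  ext x
  constructor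
  · rintro ⟨y, hy, rfl⟩
    exact fwd y hy
  · intro hx
    exact ⟨gbar.symm x, bwd x hx, gbar.apply_symm_apply x⟩
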